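/- arXiv:1810.10373 — 2 statements merged into one kernel-verified Lean document; each statement's English description precedes it below -/
import Mathlib

section
/- Suppose f : ℕ → ℕ → ℕ is such that for all finite-born numeric pregames x and y with g(x) = n and g(y) = m, the birthday of their product is g(x·y) = f(n, m). Then f is symmetric, f(n, m) = f(m, n) for all n, m, and f is strictly increasing in each argument where the other argument is positive: for all n and all m ≥ 1, f(n, m) < f(n+1, m). -/
universe u

namespace SetTheory

/-- Pre-games, as formerly in Mathlib (`Mathlib.SetTheory.Game.PGame`, removed since). -/
inductive PGame : Type (u + 1)
  | mk : ∀ α β : Type u, (α → PGame) → (β → PGame) → PGame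

namespace PGame

/-- The pair (`x ≤ y`, `x ⧏ y`), with the old Mathlib recursive characterisation:
`x ≤ y ↔ (∀ i, xL i ⧏ y) ∧ ∀ j, x ⧏ yR j` and `x ⧏ y ↔ (∃ i, x ≤ yL i) ∨ ∃ j, xR j ≤ y`. -/
noncomputable def leLF : PGame.{u} → PGame.{u} → Prop × Prop :=
  fun x => @PGame.rec (fun _ => PGame.{u} → Prop × Prop)
    (fun _ _ _ _ IHL IHR y =>
      @PGame.rec (fun _ => Prop × Prop)
        (fun yl yr yL yR IH'L IH'R =>
          ((∀ i, (IHL i (mk yl yr yL yR)).2) ∧ ∀ j, (IH'R j).2,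
           (∃ i, (IH'L i).1) ∨ ∃ j, (IHR j (mk yl yr yL yR)).1)) y) x

instance : LE PGame.{u} := ⟨fun x y => (leLF x y).1⟩

instance : LT PGame.{u} := ⟨fun x y => x ≤ y ∧ (leLF x y).2⟩

/-- Numeric pre-games, as formerly in Mathlib. -/
def Numeric : PGame.{u} → Prop
  | ⟨_, _, L, R⟩ => (∀ i j, L i < R j) ∧ (∀ i, Numeric (L i)) ∧ ∀ j, Numeric (R j)

/-- Birthday of a pre-game, as formerly in Mathlib. -/
noncomputable def birthday : PGame.{u} → Ordinal.{u}
  | ⟨_, _, xL, xR⟩ =>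
    max (Ordinal.lsub.{u, u} fun i => birthday (xL i)) (Ordinal.lsub.{u, u} fun i => birthday (xR i))

/-- Negation, as formerly in Mathlib. -/
def neg : PGame.{u} → PGame.{u}
  | ⟨l, r, L, R⟩ => ⟨r, l, fun i => neg (R i), fun i => neg (L i)⟩

instance : Neg PGame.{u} := ⟨neg⟩

/-- Addition, as formerly in Mathlib. -/
noncomputable instance : Add PGame.{u} :=
  ⟨fun x y => by
    induction x generalizing y with | mk xl xr _ _ IHxl IHxr => _
    induction y with | mk yl yr yL yR IHyl IHyr => _
    have y := mk yl yr yL yR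
    refine ⟨xl ⊕ yl, xr ⊕ yr, Sum.rec ?_ ?_, Sum.rec ?_ ?_⟩
    · exact fun i => IHxl i y
    · exact fun i => IHyl i
    · exact fun i => IHxr i y
    · exact fun i => IHyr i⟩

noncomputable instance : Sub PGame.{u} := ⟨fun x y => x + -y⟩

/-- Multiplication, as formerly in Mathlib. -/
noncomputable instance : Mul PGame.{u} :=
  ⟨fun x y => by
    induction x generalizing y with | mk xl xr _ _ IHxl IHxr => _
    induction y with | mk yl yr yL yR IHyl IHyr => _
    have y := mk yl yr yL yR
    refine ⟨(xl × yl) ⊕ (xr × yr), (xl × yr) ⊕ (xr × yl), ?_, ?_⟩ <;> rintro (⟨i, j⟩ | ⟨i, j⟩)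
    · exact IHxl i y + IHyl j - IHxl i (yL j)
    · exact IHxr i y + IHyr j - IHxr i (yR j)
    · exact IHxl i y + IHyr j - IHxl i (yR j)
    · exact IHxr i y + IHyl j - IHxr i (yL j)⟩

end PGame

end SetTheory

open SetTheory PGame Ordinal

namespace SetTheory.PGame

theorem pb_mk (a b : Type u) (L : a → PGame.{u}) (R : b → PGame.{u}) :
    birthday (mk a b L R) = max (Ordinal.lsub.{u, u} fun i => birthday (L i))
      (Ordinal.lsub.{u, u} fun i => birthday (R i)) := by
  rw [birthday]

theorem pb_lt_L {a b : Type u} {L : a → PGame.{u}} {R : b → PGame.{u}} (i : a) :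
    birthday (L i) < birthday (mk a b L R) := by
  rw [pb_mk]; exact lt_of_lt_of_le (Ordinal.lt_lsub _ i) (le_max_left _ _)

theorem pb_lt_R {a b : Type u} {L : a → PGame.{u}} {R : b → PGame.{u}} (j : b) :
    birthday (R j) < birthday (mk a b L R) := by
  rw [pb_mk]; exact lt_of_lt_of_le (Ordinal.lt_lsub _ j) (le_max_right _ _)

theorem pb_le {a b : Type u} {L : a → PGame.{u}} {R : b → PGame.{u}} {o : Ordinal.{u}}
    (hL : ∀ i, birthday (L i) < o) (hR : ∀ j, birthday (R j) < o) :
    birthday (mk a b L R) ≤ o := by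
  rw [pb_mk]; exact max_le (Ordinal.lsub_le hL) (Ordinal.lsub_le hR)

theorem pb_exists {a b : Type u} {L : a → PGame.{u}} {R : b → PGame.{u}} {o : Ordinal.{u}}
    (h : o < birthday (mk a b L R)) :
    (∃ i, o ≤ birthday (L i)) ∨ ∃ j, o ≤ birthday (R j) := by
  rw [pb_mk] at h
  rcases lt_max_iff.1 h with h | h
  · exact Or.inl (Ordinal.lt_lsub_iff.1 h)
  · exact Or.inr (Ordinal.lt_lsub_iff.1 h)

theorem pb_nat {o : Ordinal.{u}} {n : ℕ} (h : o < n) : ∃ k : ℕ, k < n ∧ o = k := by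
  obtain ⟨k, rfl⟩ := Ordinal.lt_omega0.1 (h.trans (Ordinal.nat_lt_omega0 n))
  exact ⟨k, by exact_mod_cast h, rfl⟩

theorem pb_succ_le {n : ℕ} {o : Ordinal.{u}} (h : (n : Ordinal) < o) :
    ((n + 1 : ℕ) : Ordinal) ≤ o := by
  rw [Nat.cast_succ]; exact Order.add_one_le_of_lt h

theorem pb_opt {a b : Type u} {L : a → PGame.{u}} {R : b → PGame.{u}} {k : ℕ}
    (h : birthday (mk a b L R) = ((k + 1 : ℕ) : Ordinal)) :
    (∃ i, birthday (L i) = k) ∨ ∃ j, birthday (R j) = k := by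
  have hk : (k : Ordinal) < birthday (mk a b L R) := by
    rw [h]; exact_mod_cast Nat.lt_succ_self k
  rcases pb_exists hk with ⟨i, hi⟩ | ⟨j, hj⟩
  · left; refine ⟨i, ?_⟩
    obtain ⟨k', hk', e⟩ := pb_nat (by rw [← h]; exact pb_lt_L (R := R) i)
    rw [e] at hi ⊢
    have : k ≤ k' := by exact_mod_cast hi
    congr 1; omega
  · right; refine ⟨j, ?_⟩
    obtain ⟨k', hk', e⟩ := pb_nat (by rw [← h]; exact pb_lt_R (L := L) j)
    rw [e] at hj ⊢
    have : k ≤ k' := by exact_mod_cast hj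
    congr 1; omega

theorem pb_add_mk (xl xr : Type u) (xL : xl → PGame.{u}) (xR : xr → PGame.{u})
    (yl yr : Type u) (yL : yl → PGame.{u}) (yR : yr → PGame.{u}) :
    mk xl xr xL xR + mk yl yr yL yR = mk (xl ⊕ yl) (xr ⊕ yr)
      (Sum.elim (fun i => xL i + mk yl yr yL yR) (fun j => mk xl xr xL xR + yL j))
      (Sum.elim (fun i => xR i + mk yl yr yL yR) (fun j => mk xl xr xL xR + yR j)) := rfl

theorem pb_add (x : PGame.{u}) : ∀ (y : PGame.{u}) (a b : ℕ), birthday x = a →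
    birthday y = b → birthday (x + y) = ((a + b : ℕ) : Ordinal) := by
  induction x with
  | mk xl xr xL xR IHxl IHxr =>
  intro y
  induction y with
  | mk yl yr yL yR IHyl IHyr =>
  intro a b ha hb
  rw [pb_add_mk]
  apply le_antisymm
  · apply pb_le
    · rintro (i | j)
      · obtain ⟨k, hk, e⟩ := pb_nat (by rw [← ha]; exact pb_lt_L (R := xR) i)
        show birthday (xL i + mk yl yr yL yR) < _
        rw [IHxl i _ k b e hb]; exact_mod_cast (show k + b < a + b by omega)
      · obtain ⟨k, hk, e⟩ := pb_nat (by rw [← hb]; exact pb_lt_L (R := yR) j)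
        show birthday (mk xl xr xL xR + yL j) < _
        rw [IHyl j a k ha e]; exact_mod_cast (show a + k < a + b by omega)
    · rintro (i | j)
      · obtain ⟨k, hk, e⟩ := pb_nat (by rw [← ha]; exact pb_lt_R (L := xL) i)
        show birthday (xR i + mk yl yr yL yR) < _
        rw [IHxr i _ k b e hb]; exact_mod_cast (show k + b < a + b by omega)
      · obtain ⟨k, hk, e⟩ := pb_nat (by rw [← hb]; exact pb_lt_R (L := yL) j)
        show birthday (mk xl xr xL xR + yR j) < _
        rw [IHyr j a k ha e]; exact_mod_cast (show a + k < a + b by omega)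
  · rcases a with _ | a
    · rcases b with _ | b
      · simp
      · rw [show 0 + (b + 1) = (0 + b) + 1 by omega]
        apply pb_succ_le
        rcases pb_opt hb with ⟨j, hj⟩ | ⟨j, hj⟩
        · rw [← IHyl j 0 b ha hj]; exact pb_lt_L (Sum.inr j)
        · rw [← IHyr j 0 b ha hj]; exact pb_lt_R (Sum.inr j)
    · rw [show a + 1 + b = (a + b) + 1 by omega]
      apply pb_succ_le
      rcases pb_opt ha with ⟨i, hi⟩ | ⟨i, hi⟩
      · rw [← IHxl i _ a b hi hb]; exact pb_lt_L (Sum.inl i)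
      · rw [← IHxr i _ a b hi hb]; exact pb_lt_R (Sum.inl i)

theorem pb_neg_mk (l r : Type u) (L : l → PGame.{u}) (R : r → PGame.{u}) :
    -(mk l r L R) = mk r l (fun i => -(R i)) (fun i => -(L i)) := rfl

theorem pb_neg (x : PGame.{u}) : birthday (-x) = birthday x := by
  induction x with
  | mk l r L R IHL IHR =>
  rw [pb_neg_mk, pb_mk, pb_mk]
  simp only [IHL, IHR]
  exact max_comm _ _

def pbG : ℕ → PGame.{u}
  | 0 => mk PEmpty.{u+1} PEmpty.{u+1} PEmpty.elim PEmpty.elim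
  | n + 1 => mk PUnit.{u+1} PEmpty.{u+1} (fun _ => pbG n) PEmpty.elim

theorem pbG_numeric : ∀ n, (pbG.{u} n).Numeric
  | 0 => by
    rw [pbG, Numeric]; exact ⟨fun i => i.elim, fun i => i.elim, fun j => j.elim⟩
  | n + 1 => by
    rw [pbG, Numeric]; exact ⟨fun _ j => j.elim, fun _ => pbG_numeric n, fun j => j.elim⟩

theorem pbG_birthday : ∀ n : ℕ, birthday (pbG.{u} n) = n
  | 0 => by
    rw [pbG, pb_mk, Ordinal.lsub_empty]; simp
  | n + 1 => by
    rw [pbG, pb_mk, Ordinal.lsub_empty (ι := PEmpty.{u+1})]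
    simp only [pbG_birthday n]
    rw [Ordinal.lsub_const, max_eq_left zero_le, Order.succ_eq_add_one]
    push_cast; rfl

theorem pb_zero_mul (y : PGame.{u}) : birthday (pbG 0 * y) = 0 := by
  cases y with
  | mk yl yr yL yR =>
  apply le_antisymm _ zero_le
  refine pb_le ?_ ?_ <;> rintro (⟨⟨⟩, _⟩ | ⟨⟨⟩, _⟩)

theorem pb_mul_zero (x : PGame.{u}) : birthday (x * pbG 0) = 0 := by
  cases x with
  | mk xl xr xL xR =>
  apply le_antisymm _ zero_le
  refine pb_le ?_ ?_ <;> rintro (⟨_, ⟨⟩⟩ | ⟨_, ⟨⟩⟩)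

theorem pb_mul_succ (n m : ℕ) : birthday (pbG.{u} (n + 1) * pbG (m + 1)) =
    birthday (pbG n * pbG (m + 1) + pbG (n + 1) * pbG m - pbG n * pbG m) + 1 := by
  apply le_antisymm
  · refine pb_le ?_ ?_
    · rintro (⟨⟨⟩, ⟨⟩⟩ | ⟨⟨⟩, _⟩)
      exact Order.lt_add_one_iff.2 (le_of_eq rfl)
    · rintro (⟨_, ⟨⟩⟩ | ⟨⟨⟩, _⟩)
  · exact Order.add_one_le_of_lt (pb_lt_L (Sum.inl (PUnit.unit, PUnit.unit)))

end SetTheory.PGame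

open SetTheory PGame Ordinal

theorem mul_birthday_function_symm_and_strictMono (f : ℕ → ℕ → ℕ)
    (hf : ∀ (x y : PGame), x.Numeric → y.Numeric →
      ∀ n m : ℕ, x.birthday = (n : Ordinal) → y.birthday = (m : Ordinal) →
        (x * y).birthday = (f n m : Ordinal)) :
    (∀ n m : ℕ, f n m = f m n) ∧
    (∀ n m : ℕ, 1 ≤ m → f n m < f (n + 1) m) := by
  have key : ∀ n m : ℕ, birthday (pbG n * pbG m) = (f n m : Ordinal) := fun n m =>
    hf _ _ (pbG_numeric n) (pbG_numeric m) n m (pbG_birthday n) (pbG_birthday m)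
  have f0 : ∀ m, f 0 m = 0 := fun m => by
    have := key 0 m; rw [pb_zero_mul] at this; exact_mod_cast this.symm
  have fz : ∀ n, f n 0 = 0 := fun n => by
    have := key n 0; rw [pb_mul_zero] at this; exact_mod_cast this.symm
  have hrec : ∀ n m, f (n + 1) (m + 1) = f n (m + 1) + f (n + 1) m + f n m + 1 := by
    intro n m
    have h1 := pb_add _ _ _ _ (key n (m + 1)) (key (n + 1) m)
    have h2 : birthday (-(pbG n * pbG m)) = (f n m : Ordinal) := (pb_neg _).trans (key n m)
    have h3 : birthday (pbG n * pbG (m + 1) + pbG (n + 1) * pbG m - pbG n * pbG m) =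
        ((f n (m + 1) + f (n + 1) m + f n m : ℕ) : Ordinal) := pb_add _ _ _ _ h1 h2
    have := key (n + 1) (m + 1)
    rw [pb_mul_succ, h3] at this
    exact_mod_cast this.symm
  have symm : ∀ s n m, n + m ≤ s → f n m = f m n := by
    intro s
    induction s with
    | zero =>
      intro n m h
      obtain rfl : n = 0 := by omega
      obtain rfl : m = 0 := by omega
      rfl
    | succ s ih =>
      intro n m h
      rcases n with _ | n
      · rw [f0, fz]
      rcases m with _ | m
      · rw [f0, fz]
      have e1 := ih n (m + 1) (by omega)
      have e2 := ih (n + 1) m (by omega)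
      have e3 := ih n m (by omega)
      rw [hrec n m, hrec m n]; omega
  refine ⟨fun n m => symm _ n m le_rfl, ?_⟩
  intro n m hm
  obtain ⟨m, rfl⟩ : ∃ k, m = k + 1 := ⟨m - 1, by omega⟩
  rw [hrec n m]; omega
end

section
/- Define f : ℕ → ℕ → ℕ by f(0, m) = 0, f(n, 0) = 0, and f(n+1, m+1) = f(n+1, m) + f(n, m+1) + f(n, m) + 1, so that f(n, n) is the birthday of the square of a finite-born surreal form of birthday n. Then f(n, n) ∼ a·λ^n/√n as n → ∞, where λ = 3 + 2√2 and a = 2^(−9/4)·√(λ/π); precisely, the sequence (f(n, n)·√n)/λ^n converges to a as n → ∞. -/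
open Filter Real

/-- The recurrence governing birthdays of surreal products. -/
def birthdayMulFun : ℕ → ℕ → ℕ
  | 0, _ => 0
  | _ + 1, 0 => 0
  | n + 1, m + 1 =>
      birthdayMulFun (n + 1) m + birthdayMulFun n (m + 1) + birthdayMulFun n m + 1

noncomputable def S : ℂ := (Real.sqrt 2 : ℝ)

lemma S_mul_S : S * S = 2 := by
  unfold S
  rw [← Complex.ofReal_mul, Real.mul_self_sqrt (by norm_num)]
  norm_num

lemma key_pt (θ : ℝ) :
    (1 + S * Complex.exp (Complex.I * θ)) * (1 + S * Complex.exp (-Complex.I * θ))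
      = ((3 + 2 * Real.sqrt 2 * Real.cos θ : ℝ) : ℂ) := by
  have h1 : Complex.exp (Complex.I * θ) * Complex.exp (-Complex.I * θ) = 1 := by
    rw [← Complex.exp_add]; ring_nf; exact Complex.exp_zero
  have h2 : Complex.exp (Complex.I * θ) + Complex.exp (-Complex.I * θ)
      = 2 * Complex.cos θ := by
    rw [Complex.cos]; ring_nf
  have h3 : ((3 + 2 * Real.sqrt 2 * Real.cos θ : ℝ) : ℂ) = 3 + 2 * S * Complex.cos θ := by
    unfold S; push_cast [Complex.ofReal_cos]; ring
  rw [h3]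
  linear_combination (S*S) * h1 + S * h2 + S_mul_S
lemma int_exp_zero (k : ℕ) (hk : k ≠ 0) (ε : ℂ) (hε : ε = Complex.I ∨ ε = -Complex.I) :
    ∫ θ : ℝ in (-π)..π, Complex.exp (((k : ℂ) * ε) * θ) = 0 := by
  have hεne : ε ≠ 0 := by rcases hε with h | h <;> simp [h, Complex.I_ne_zero]
  have hne : (k : ℂ) * ε ≠ 0 := mul_ne_zero (Nat.cast_ne_zero.2 hk) hεne
  rw [integral_exp_mul_complex hne]
  have hval : ∀ x : ℂ, x = Complex.I ∨ x = -Complex.I →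
      Complex.exp (((k : ℂ) * x) * (π : ℂ)) = (-1) ^ k := by
    intro x hx
    rcases hx with h | h <;> subst h
    · rw [show (k : ℂ) * Complex.I * (π : ℂ) = k * ((π : ℂ) * Complex.I) by ring,
        Complex.exp_nat_mul, Complex.exp_pi_mul_I]
    · rw [show (k : ℂ) * (-Complex.I) * (π : ℂ) = k * (-((π : ℂ) * Complex.I)) by ring,
        Complex.exp_nat_mul, Complex.exp_neg, Complex.exp_pi_mul_I]
      norm_num
  have h1 : Complex.exp (((k : ℂ) * ε) * ((π : ℝ) : ℂ)) = (-1) ^ k := hval ε hε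
  have h2 : Complex.exp (((k : ℂ) * ε) * ((-π : ℝ) : ℂ)) = (-1) ^ k := by
    push_cast
    rw [show (k : ℂ) * ε * (-(π:ℂ)) = (k : ℂ) * (-ε) * (π:ℂ) by ring]
    exact hval (-ε) (by rcases hε with h | h <;> simp [h])
  rw [h1, h2]
  simp

lemma boundary_int (n : ℕ) (ε : ℂ) (hε : ε = Complex.I ∨ ε = -Complex.I) :
    ∫ θ : ℝ in (-π)..π, (1 + S * Complex.exp (ε * θ)) ^ n = 2 * π := by
  have hcont : ∀ k : ℕ, Continuous fun θ : ℝ => Complex.exp (((k:ℂ) * ε) * θ) := by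
    intro k; fun_prop
  have hexp : ∀ (θ : ℝ) (k : ℕ), (S * Complex.exp (ε * θ)) ^ k
      = S ^ k * Complex.exp (((k:ℂ) * ε) * θ) := by
    intro θ k
    rw [mul_pow, ← Complex.exp_nat_mul]
    ring_nf
  calc ∫ θ : ℝ in (-π)..π, (1 + S * Complex.exp (ε * θ)) ^ n
      = ∫ θ : ℝ in (-π)..π, ∑ k ∈ Finset.range (n+1),
          S ^ k * Complex.exp (((k:ℂ) * ε) * θ) * (n.choose k : ℂ) := by
        apply intervalIntegral.integral_congr
        intro θ _
        show (1 + S * Complex.exp (ε * θ)) ^ n = _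
        rw [show (1 : ℂ) + S * Complex.exp (ε * θ) = S * Complex.exp (ε * θ) + 1 by ring,
          add_pow]
        simp only [one_pow, mul_one]
        exact Finset.sum_congr rfl fun k _ => by rw [hexp]
    _ = ∑ k ∈ Finset.range (n+1),
          ∫ θ : ℝ in (-π)..π, S ^ k * Complex.exp (((k:ℂ) * ε) * θ) * (n.choose k : ℂ) := by
        apply intervalIntegral.integral_finset_sum
        intro k _
        exact ((continuous_const.mul (hcont k)).mul continuous_const).intervalIntegrable _ _
    _ = 2 * π := by
        rw [Finset.sum_eq_single 0]
        · simp [intervalIntegral.integral_const]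
          ring
        · intro k _ hk
          rw [intervalIntegral.integral_mul_const, intervalIntegral.integral_const_mul,
            int_exp_zero k hk ε hε]
          simp
        · simp
noncomputable def Jint (n m : ℕ) : ℂ :=
  ∫ θ : ℝ in (-π)..π,
    (1 + S * Complex.exp (Complex.I * θ)) ^ n * (1 + S * Complex.exp (-Complex.I * θ)) ^ m

lemma Jcont (n m : ℕ) : Continuous fun θ : ℝ =>
    (1 + S * Complex.exp (Complex.I * θ)) ^ n * (1 + S * Complex.exp (-Complex.I * θ)) ^ m := by
  fun_prop

lemma pt_rec (a b : ℂ) (hab : a * b = 2) (n m : ℕ) :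
    (1+a)^(n+1) * (1+b)^(m+1)
      = (1+a)^(n+1) * (1+b)^m + (1+a)^n * (1+b)^(m+1) + (1+a)^n * (1+b)^m := by
  linear_combination ((1+a)^n * (1+b)^m) * hab

lemma Jrec (n m : ℕ) :
    Jint (n+1) (m+1) = Jint (n+1) m + Jint n (m+1) + Jint n m := by
  unfold Jint
  rw [← intervalIntegral.integral_add ((Jcont (n+1) m).intervalIntegrable _ _)
        ((Jcont n (m+1)).intervalIntegrable _ _),
      ← intervalIntegral.integral_add (f := fun θ : ℝ => (1 + S * Complex.exp (Complex.I * θ)) ^ (n+1) * (1 + S * Complex.exp (-Complex.I * θ)) ^ m + (1 + S * Complex.exp (Complex.I * θ)) ^ n * (1 + S * Complex.exp (-Complex.I * θ)) ^ (m+1)) (((Jcont (n+1) m).add (Jcont n (m+1))).intervalIntegrable _ _)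
        ((Jcont n m).intervalIntegrable _ _)]
  apply intervalIntegral.integral_congr
  intro θ _
  show (1 + S * Complex.exp (Complex.I * θ)) ^ (n+1) * (1 + S * Complex.exp (-Complex.I * θ)) ^ (m+1) = _
  have hab : (S * Complex.exp (Complex.I * θ)) * (S * Complex.exp (-Complex.I * θ)) = 2 := by
    rw [show (S * Complex.exp (Complex.I * θ)) * (S * Complex.exp (-Complex.I * θ))
        = (S * S) * (Complex.exp (Complex.I * θ + -Complex.I * θ)) by rw [Complex.exp_add]; ring]
    simp [S_mul_S]
  exact pt_rec _ _ hab n m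

lemma J_eq : ∀ n m : ℕ, Jint n m = ((2 * birthdayMulFun n m + 1 : ℕ) : ℂ) * (2 * π)
  | 0, m => by
      unfold Jint
      simp only [pow_zero, one_mul]
      rw [boundary_int m (-Complex.I) (Or.inr rfl)]
      simp only [birthdayMulFun]
      norm_num
  | n+1, 0 => by
      unfold Jint
      simp only [pow_zero, mul_one]
      rw [boundary_int (n+1) Complex.I (Or.inl rfl)]
      simp only [birthdayMulFun]
      norm_num
  | n+1, m+1 => by
      rw [Jrec, J_eq (n+1) m, J_eq n (m+1), J_eq n m]
      simp only [birthdayMulFun]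
      push_cast
      ring
noncomputable def lam : ℝ := 3 + 2 * Real.sqrt 2

lemma sqrt2_lt : Real.sqrt 2 < 3 / 2 := by
  rw [show (3/2 : ℝ) = Real.sqrt ((3/2)^2) by rw [Real.sqrt_sq]; norm_num]
  apply Real.sqrt_lt_sqrt <;> norm_num

lemma sqrt2_pos : 0 < Real.sqrt 2 := Real.sqrt_pos.2 (by norm_num)

lemma lam_pos : 0 < lam := by unfold lam; nlinarith [sqrt2_pos]

lemma hfun_pos (θ : ℝ) : 0 < 3 + 2 * Real.sqrt 2 * Real.cos θ := by
  nlinarith [Real.neg_one_le_cos θ, sqrt2_lt, sqrt2_pos, Real.cos_le_one θ]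

lemma one_sub_cos (θ : ℝ) : 1 - Real.cos θ = 2 * Real.sin (θ/2) ^ 2 := by
  have := Real.sin_sq_eq_half_sub (θ/2)
  rw [show 2 * (θ/2) = θ by ring] at this
  linarith

lemma one_sub_cos_ge (θ : ℝ) (hθ : |θ| ≤ π) : 2 * θ^2 / π^2 ≤ 1 - Real.cos θ := by
  rw [one_sub_cos]
  have h2 : |θ/2| ≤ π/2 := by rw [abs_div]; simp [abs_of_pos Real.pi_pos]; linarith [abs_nonneg θ]
  have := Real.mul_abs_le_abs_sin h2
  have hsq : (2/π * |θ/2|)^2 ≤ |Real.sin (θ/2)|^2 := by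
    apply sq_le_sq' <;> nlinarith [abs_nonneg (Real.sin (θ/2)), abs_nonneg (θ/2),
      mul_nonneg (le_of_lt (div_pos two_pos Real.pi_pos)) (abs_nonneg (θ/2))]
  rw [sq_abs] at hsq
  have hppos := Real.pi_pos
  calc 2 * θ^2 / π^2 = 2 * ((2/π * |θ/2|)^2) := by
        rw [mul_pow, div_pow, abs_div, div_pow, sq_abs, sq_abs]
        field_simp
    _ ≤ 2 * Real.sin (θ/2)^2 := by linarith

noncomputable def cb : ℝ := 4 * Real.sqrt 2 / (lam * π^2)
noncomputable def cc : ℝ := Real.sqrt 2 / lam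

lemma cb_pos : 0 < cb := by
  unfold cb
  exact div_pos (by nlinarith [sqrt2_pos]) (mul_pos lam_pos (pow_pos Real.pi_pos 2))

lemma cc_pos : 0 < cc := div_pos sqrt2_pos lam_pos

lemma ratio_eq (θ : ℝ) : (3 + 2*Real.sqrt 2*Real.cos θ)/lam
    = 1 + (-(2*Real.sqrt 2/lam) * (1 - Real.cos θ)) := by
  have h := lam_pos
  field_simp
  unfold lam
  ring

lemma ratio_nonneg (θ : ℝ) : 0 ≤ (3 + 2*Real.sqrt 2*Real.cos θ)/lam :=
  le_of_lt (div_pos (hfun_pos θ) lam_pos)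

lemma ratio_le (θ : ℝ) (hθ : |θ| ≤ π) :
    (3 + 2*Real.sqrt 2*Real.cos θ)/lam ≤ Real.exp (-(cb * θ^2)) := by
  have h1 := one_sub_cos_ge θ hθ
  have h2 : (3 + 2*Real.sqrt 2*Real.cos θ)/lam ≤ 1 + (-(cb * θ^2)) := by
    rw [ratio_eq]
    have hc : 0 < 2*Real.sqrt 2/lam := div_pos (by nlinarith [sqrt2_pos]) lam_pos
    have : cb * θ^2 ≤ (2*Real.sqrt 2/lam) * (1 - Real.cos θ) := by
      calc cb * θ^2 = (2*Real.sqrt 2/lam) * (2 * θ^2 / π^2) := by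
            unfold cb; field_simp; ring
        _ ≤ (2*Real.sqrt 2/lam) * (1 - Real.cos θ) := by
            apply mul_le_mul_of_nonneg_left h1 (le_of_lt hc)
    linarith
  exact h2.trans (by linarith [Real.add_one_le_exp (-(cb * θ^2))])

lemma tendsto_sin_div : Tendsto (fun y : ℝ => Real.sin y / y) (nhdsWithin 0 {(0:ℝ)}ᶜ) (nhds 1) := by
  have h := hasDerivAt_sin (0:ℝ)
  rw [hasDerivAt_iff_tendsto_slope] at h
  rw [Real.cos_zero] at h
  refine h.congr fun y => ?_
  simp [slope_def_field]

lemma tendsto_log_div :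
    Tendsto (fun v : ℝ => Real.log (1+v) / v) (nhdsWithin 0 {(0:ℝ)}ᶜ) (nhds 1) := by
  have h := Real.hasDerivAt_log (one_ne_zero)
  rw [hasDerivAt_iff_tendsto_slope] at h
  have hmap : Tendsto (fun v : ℝ => 1 + v) (nhdsWithin 0 {(0:ℝ)}ᶜ)
      (nhdsWithin 1 {(1:ℝ)}ᶜ) := by
    apply tendsto_nhdsWithin_of_tendsto_nhds_of_eventually_within
    · have hcont : Tendsto (fun v : ℝ => 1 + v) (nhds 0) (nhds (1 + 0)) :=
        (continuous_const.add continuous_id).tendsto (0:ℝ)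
      rw [add_zero] at hcont
      exact hcont.mono_left nhdsWithin_le_nhds
    · filter_upwards [self_mem_nhdsWithin] with v hv
      simp only [Set.mem_compl_iff, Set.mem_singleton_iff] at hv ⊢
      intro hc; exact hv (by linarith)
  have := h.comp hmap
  simp only [inv_one] at this
  refine this.congr fun v => ?_
  simp [slope_def_field, Function.comp]

lemma tendsto_sqrt_nat : Tendsto (fun n : ℕ => Real.sqrt n) atTop atTop := by
  have h := (tendsto_rpow_atTop (by norm_num : (0:ℝ) < 1/2)).comp
    (tendsto_natCast_atTop_atTop (R := ℝ))
  exact h.congr fun n => (Real.sqrt_eq_rpow _).symm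

lemma xn_tendsto (t : ℝ) : Tendsto (fun n : ℕ => t / Real.sqrt n) atTop (nhds 0) := by
  have h := (tendsto_inv_atTop_zero.comp tendsto_sqrt_nat).const_mul t
  rw [mul_zero] at h
  exact h.congr fun n => by rw [Function.comp_apply, div_eq_mul_inv]

lemma pt_lim (t : ℝ) :
    Tendsto (fun n : ℕ => ((3 + 2*Real.sqrt 2*Real.cos (t / Real.sqrt n))/lam)^n)
      atTop (nhds (Real.exp (-(cc * t^2)))) := by
  rcases eq_or_ne t 0 with rfl | ht
  · simp only [zero_div, Real.cos_zero, mul_one]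
    have : (3 + 2*Real.sqrt 2)/lam = 1 := by
      rw [div_eq_one_iff_eq lam_pos.ne']; rfl
    rw [this]
    simpa using tendsto_const_nhds
  -- t ≠ 0
  set xn : ℕ → ℝ := fun n => t / Real.sqrt n with hxn
  have hx0 : Tendsto xn atTop (nhds 0) := xn_tendsto t
  have hxne : ∀ᶠ n : ℕ in atTop, xn n ≠ 0 := by
    filter_upwards [eventually_ge_atTop 1] with n hn
    have hs : 0 < Real.sqrt n := Real.sqrt_pos.2 (by exact_mod_cast Nat.pos_of_ne_zero (by omega))
    exact div_ne_zero ht hs.ne'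
  -- Step 1 : sqrt n * sin (xn n / 2) → t/2
  have hyne : ∀ᶠ n : ℕ in atTop, xn n / 2 ≠ 0 := by
    filter_upwards [hxne] with n hn; exact div_ne_zero hn two_ne_zero
  have hy0 : Tendsto (fun n => xn n / 2) atTop (nhdsWithin 0 {(0:ℝ)}ᶜ) := by
    apply tendsto_nhdsWithin_of_tendsto_nhds_of_eventually_within
    · simpa using hx0.div_const 2
    · filter_upwards [hyne] with n hn; simpa using hn
  have hsin : Tendsto (fun n => Real.sin (xn n / 2) / (xn n / 2)) atTop (nhds 1) :=
    tendsto_sin_div.comp hy0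
  have hstep1 : Tendsto (fun n : ℕ => Real.sqrt n * Real.sin (xn n / 2)) atTop (nhds (t/2)) := by
    have hmul := hsin.mul_const (t/2)
    rw [one_mul] at hmul
    apply hmul.congr'
    filter_upwards [eventually_ge_atTop 1] with n hn
    have hs : 0 < Real.sqrt n := Real.sqrt_pos.2 (by exact_mod_cast Nat.pos_of_ne_zero (by omega))
    have : xn n / 2 = t / (2 * Real.sqrt n) := by rw [hxn]; ring
    rw [this]
    field_simp
  -- Step 2 : n * (1 - cos (xn n)) → t^2/2
  have hstep2 : Tendsto (fun n : ℕ => (n : ℝ) * (1 - Real.cos (xn n))) atTop (nhds (t^2/2)) := by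
    have hsq : Tendsto (fun n : ℕ => 2 * (Real.sqrt n * Real.sin (xn n / 2))^2) atTop
        (nhds (2 * (t/2)^2)) := by
      have h0 := (hstep1.mul hstep1).const_mul 2
      rw [show 2 * (t/2 * (t/2)) = 2 * (t/2)^2 by ring] at h0
      exact h0.congr fun n => by ring
    have heq : ∀ n : ℕ, (n : ℝ) * (1 - Real.cos (xn n))
        = 2 * (Real.sqrt n * Real.sin (xn n / 2))^2 := by
      intro n
      rw [one_sub_cos (xn n), mul_pow, Real.sq_sqrt (Nat.cast_nonneg n)]
      ring
    rw [show t^2/2 = 2 * (t/2)^2 by ring]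
    exact hsq.congr fun n => (heq n).symm
  -- Step 3 : v n and n * v n
  set v : ℕ → ℝ := fun n => -(2*Real.sqrt 2/lam) * (1 - Real.cos (xn n)) with hv
  have hnv : Tendsto (fun n : ℕ => (n:ℝ) * v n) atTop (nhds (-(cc * t^2))) := by
    have := hstep2.const_mul (-(2*Real.sqrt 2/lam))
    have heq : -(2*Real.sqrt 2/lam) * (t^2/2) = -(cc * t^2) := by
      unfold cc; field_simp
    rw [heq] at this
    exact this.congr fun n => by rw [hv]; ring
  have hv0 : Tendsto v atTop (nhds 0) := by
    have hcos : Tendsto (fun n => 1 - Real.cos (xn n)) atTop (nhds 0) := by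
      have := ((Real.continuous_cos.tendsto 0).comp hx0).const_sub 1
      simpa using this
    have := hcos.const_mul (-(2*Real.sqrt 2/lam))
    rw [mul_zero] at this
    exact this
  have hvne : ∀ᶠ n : ℕ in atTop, v n ≠ 0 := by
    have habs : ∀ᶠ n : ℕ in atTop, |xn n| ≤ π := by
      have := hx0.abs
      rw [abs_zero] at this
      exact this.eventually_le_const Real.pi_pos
    filter_upwards [hxne, habs] with n hne habs
    have h1 := one_sub_cos_ge (xn n) habs
    have h2 : 0 < (xn n)^2 := by positivity
    have h3 : 0 < 1 - Real.cos (xn n) := by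
      have : 0 < 2 * (xn n)^2 / π^2 := by positivity
      linarith
    rw [hv]
    simp only [neg_mul, ne_eq, neg_eq_zero]
    intro hc
    rcases mul_eq_zero.1 hc with h | h
    · have : 0 < 2*Real.sqrt 2/lam := div_pos (by nlinarith [sqrt2_pos]) lam_pos
      linarith
    · linarith
  -- Step 4 : n * log (1 + v n) → -(cc t^2)
  have hvin : Tendsto v atTop (nhdsWithin 0 {(0:ℝ)}ᶜ) := by
    apply tendsto_nhdsWithin_of_tendsto_nhds_of_eventually_within _ hv0
    filter_upwards [hvne] with n hn; simpa using hn
  have hlogdiv : Tendsto (fun n => Real.log (1 + v n) / v n) atTop (nhds 1) :=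
    tendsto_log_div.comp hvin
  have hlog : Tendsto (fun n : ℕ => (n:ℝ) * Real.log (1 + v n)) atTop (nhds (-(cc * t^2))) := by
    have hmul := hnv.mul hlogdiv
    rw [mul_one] at hmul
    apply hmul.congr'
    filter_upwards [hvne] with n hn
    field_simp
  -- Step 5 : conclude
  have hfin := (Real.continuous_exp.tendsto _).comp hlog
  apply hfin.congr
  intro n
  have hpos : 0 < 1 + v n := by
    rw [hv, ← ratio_eq (xn n)]
    exact div_pos (hfun_pos _) lam_pos
  rw [Function.comp_apply, ← Real.log_pow, Real.exp_log (pow_pos hpos n), ratio_eq (xn n)]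
noncomputable def Ffun (n : ℕ) : ℝ → ℝ :=
  Set.indicator (Set.Ioc (-(π * Real.sqrt n)) (π * Real.sqrt n))
    (fun t => ((3 + 2*Real.sqrt 2*Real.cos (t / Real.sqrt n))/lam)^n)

lemma Ffun_meas (n : ℕ) : MeasureTheory.AEStronglyMeasurable (Ffun n) MeasureTheory.volume := by
  apply MeasureTheory.AEStronglyMeasurable.indicator _ measurableSet_Ioc
  exact (Continuous.pow (by fun_prop) n).aestronglyMeasurable

lemma Ffun_bound (n : ℕ) (t : ℝ) : ‖Ffun n t‖ ≤ Real.exp (-cb * t^2) := by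
  unfold Ffun
  by_cases ht : t ∈ Set.Ioc (-(π * Real.sqrt n)) (π * Real.sqrt n)
  · rw [Set.indicator_of_mem ht]
    obtain ⟨ht1, ht2⟩ := ht
    rcases n with _ | m
    · exfalso
      simp only [Nat.cast_zero, Real.sqrt_zero, mul_zero, neg_zero] at ht1 ht2
      linarith
    · set n := m + 1
      have hnpos : (0:ℝ) < n := by exact_mod_cast Nat.succ_pos m
      have hs : 0 < Real.sqrt n := Real.sqrt_pos.2 hnpos
      have habs : |t / Real.sqrt n| ≤ π := by
        rw [abs_div, abs_of_pos hs, div_le_iff₀ hs]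
        rw [abs_le]
        constructor <;> nlinarith
      have h1 := ratio_le (t / Real.sqrt n) habs
      have h0 := ratio_nonneg (t / Real.sqrt n)
      rw [Real.norm_eq_abs, abs_of_nonneg (pow_nonneg h0 n)]
      calc ((3 + 2*Real.sqrt 2*Real.cos (t / Real.sqrt n))/lam)^n
          ≤ (Real.exp (-(cb * (t / Real.sqrt n)^2)))^n := pow_le_pow_left₀ h0 h1 n
        _ = Real.exp ((n:ℝ) * (-(cb * (t / Real.sqrt n)^2))) := by
            rw [← Real.exp_nat_mul]
        _ = Real.exp (-cb * t^2) := by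
            congr 1
            rw [div_pow, Real.sq_sqrt hnpos.le]
            field_simp
  · rw [Set.indicator_of_notMem ht]
    simp [Real.exp_nonneg]

lemma Ffun_lim (t : ℝ) :
    Tendsto (fun n : ℕ => Ffun n t) atTop (nhds (Real.exp (-(cc * t^2)))) := by
  have hev : ∀ᶠ n : ℕ in atTop,
      Ffun n t = ((3 + 2*Real.sqrt 2*Real.cos (t / Real.sqrt n))/lam)^n := by
    have hsq : Tendsto (fun n : ℕ => π * Real.sqrt n) atTop atTop :=
      tendsto_sqrt_nat.const_mul_atTop Real.pi_pos
    filter_upwards [hsq.eventually_ge_atTop (|t| + 1)] with n hn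
    apply Set.indicator_of_mem
    have habs : |t| < π * Real.sqrt n := lt_of_lt_of_le (lt_add_one |t|) hn
    constructor
    · linarith [neg_abs_le t]
    · linarith [le_abs_self t]
  exact (pt_lim t).congr' (hev.mono fun n h => h.symm)

lemma main_tendsto :
    Tendsto (fun n : ℕ => Real.sqrt n * ∫ θ in (-π)..π, ((3 + 2*Real.sqrt 2*Real.cos θ)/lam)^n)
      atTop (nhds (Real.sqrt (π / cc))) := by
  have hDCT := MeasureTheory.tendsto_integral_of_dominated_convergence
    (F := Ffun) (f := fun t => Real.exp (-(cc * t^2))) (μ := MeasureTheory.volume)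
    (fun t => Real.exp (-cb * t^2)) Ffun_meas
    (integrable_exp_neg_mul_sq cb_pos)
    (fun n => MeasureTheory.ae_of_all _ (Ffun_bound n))
    (MeasureTheory.ae_of_all _ Ffun_lim)
  have hgauss : (∫ t : ℝ, Real.exp (-(cc * t^2))) = Real.sqrt (π / cc) := by
    rw [show (fun t : ℝ => Real.exp (-(cc * t^2))) = fun t : ℝ => Real.exp (-cc * t^2) by
      funext t; rw [neg_mul]]
    exact integral_gaussian cc
  rw [hgauss] at hDCT
  apply hDCT.congr'
  filter_upwards [eventually_ge_atTop 1] with n hn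
  have hnpos : (0:ℝ) < n := by exact_mod_cast Nat.pos_of_ne_zero (by omega)
  have hs : 0 < Real.sqrt n := Real.sqrt_pos.2 hnpos
  have hle : -(π * Real.sqrt n) ≤ π * Real.sqrt n := by
    have := Real.pi_pos; nlinarith
  rw [show (∫ t : ℝ, Ffun n t) = ∫ t in Set.Ioc (-(π * Real.sqrt n)) (π * Real.sqrt n),
      ((3 + 2*Real.sqrt 2*Real.cos (t / Real.sqrt n))/lam)^n from
    MeasureTheory.integral_indicator measurableSet_Ioc,
    ← intervalIntegral.integral_of_le hle,
    intervalIntegral.integral_comp_div (fun θ => ((3 + 2*Real.sqrt 2*Real.cos θ)/lam)^n) hs.ne']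
  rw [neg_div, mul_div_assoc, div_self hs.ne', mul_one]
  simp [smul_eq_mul]
lemma diag_real (n : ℕ) :
    (∫ θ in (-π)..π, (3 + 2*Real.sqrt 2*Real.cos θ)^n)
      = (2*(birthdayMulFun n n : ℝ)+1)*(2*π) := by
  have hJ := J_eq n n
  have hcast : ((∫ θ in (-π)..π, (3 + 2*Real.sqrt 2*Real.cos θ)^n : ℝ) : ℂ) = Jint n n := by
    rw [← intervalIntegral.integral_ofReal]
    unfold Jint
    apply intervalIntegral.integral_congr
    intro θ _
    show (((3 + 2*Real.sqrt 2*Real.cos θ)^n : ℝ) : ℂ)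
        = (1 + S*Complex.exp (Complex.I*θ))^n * (1 + S*Complex.exp (-Complex.I*θ))^n
    rw [← mul_pow, key_pt]
    push_cast
    ring
  rw [hJ] at hcast
  have h2 : ((2*(birthdayMulFun n n : ℝ)+1)*(2*π) : ℝ)
      = ((((2 * birthdayMulFun n n + 1 : ℕ) : ℂ) * (2 * (π:ℝ)) : ℂ)).re := by
    push_cast
    simp
  rw [h2, ← hcast]
  simp

lemma sqrt_div_pow_tendsto : Tendsto (fun n : ℕ => Real.sqrt n / lam^n) atTop (nhds 0) := by
  have hl1 : 1 < lam := by unfold lam; nlinarith [sqrt2_pos]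
  have hlpos := lam_pos
  have hinv0 : (0:ℝ) ≤ 1/lam := by positivity
  have hinv1 : 1/lam < 1 := by rw [div_lt_one hlpos]; exact hl1
  have hbig := tendsto_self_mul_const_pow_of_lt_one hinv0 hinv1
  apply squeeze_zero (fun n => by positivity) _ hbig
  intro n
  have h1 : Real.sqrt n ≤ n := by
    have h2 : Real.sqrt (n:ℝ) ≤ Real.sqrt ((n:ℝ)^2) :=
      Real.sqrt_le_sqrt (by exact_mod_cast Nat.le_self_pow two_ne_zero n)
    rwa [Real.sqrt_sq (Nat.cast_nonneg n)] at h2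
  calc Real.sqrt n / lam^n ≤ (n:ℝ) / lam^n := by gcongr
    _ = (n:ℝ) * (1/lam)^n := by rw [one_div_pow, mul_one_div]

lemma const_eq : Real.sqrt (π / cc) / (4*π) = (2:ℝ)^(-(9:ℝ)/4) * Real.sqrt (lam/π) := by
  have hppos := Real.pi_pos
  have hlpos := lam_pos
  have hs2 := sqrt2_pos
  have hccpos := cc_pos
  have h4pi : (4*π) = Real.sqrt (16*π^2) := by
    rw [show (16:ℝ)*π^2 = (4*π)^2 by ring, Real.sqrt_sq (by positivity)]
  have h94 : (2:ℝ)^(-(9:ℝ)/4) = Real.sqrt ((2:ℝ)^(-(9:ℝ)/2)) := by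
    rw [Real.sqrt_eq_rpow, ← Real.rpow_mul (by norm_num : (0:ℝ) ≤ 2)]
    norm_num
  have h92 : (2:ℝ)^(-(9:ℝ)/2) = (16*Real.sqrt 2)⁻¹ := by
    rw [show -(9:ℝ)/2 = -((9:ℝ)/2) by norm_num, Real.rpow_neg (by norm_num : (0:ℝ) ≤ 2)]
    congr 1
    rw [show (9:ℝ)/2 = ((4:ℕ):ℝ) + 1/2 by norm_num, Real.rpow_add two_pos,
      Real.rpow_natCast, ← Real.sqrt_eq_rpow]
    norm_num
  rw [h4pi, ← Real.sqrt_div (by positivity), h94,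
    ← Real.sqrt_mul (by positivity)]
  congr 1
  rw [h92]
  unfold cc
  have h2ne : Real.sqrt 2 ≠ 0 := hs2.ne'
  field_simp

theorem birthdayMulFun_diag_asymptotic :
    Filter.Tendsto
      (fun n : ℕ => (birthdayMulFun n n : ℝ) * Real.sqrt n / (3 + 2 * Real.sqrt 2) ^ n)
      Filter.atTop
      (nhds ((2 : ℝ) ^ (-(9 : ℝ) / 4) *
        Real.sqrt ((3 + 2 * Real.sqrt 2) / Real.pi))) := by
  have hlpos := lam_pos
  have hppos := Real.pi_pos
  have hz : Tendsto (fun n : ℕ => Real.sqrt n/(2*lam^n)) atTop (nhds 0) := by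
    have := sqrt_div_pow_tendsto.div_const 2
    rw [zero_div] at this
    exact this.congr fun n => by rw [div_div, mul_comm]
  have hA := main_tendsto
  have hcomb := (hA.div_const (4*π)).sub hz
  rw [sub_zero, const_eq] at hcomb
  have hgoal : Tendsto
      (fun n : ℕ => (birthdayMulFun n n : ℝ) * Real.sqrt n / lam ^ n)
      atTop (nhds ((2 : ℝ) ^ (-(9 : ℝ) / 4) * Real.sqrt (lam / π))) := by
    apply hcomb.congr
    intro n
    have hint : (∫ θ in (-π)..π, ((3 + 2*Real.sqrt 2*Real.cos θ)/lam)^n)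
        = (∫ θ in (-π)..π, (3 + 2*Real.sqrt 2*Real.cos θ)^n)/lam^n := by
      rw [← intervalIntegral.integral_div]
      apply intervalIntegral.integral_congr
      intro θ _
      show ((3 + 2*Real.sqrt 2*Real.cos θ)/lam)^n = (3 + 2*Real.sqrt 2*Real.cos θ)^n / lam^n
      rw [div_pow]
    rw [hint, diag_real n]
    have hlne : lam^n ≠ 0 := (pow_pos hlpos n).ne'
    field_simp
    ring
  unfold lam at hgoal
  exact hgoal
end
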